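/- Let τ ∈ (0,2) be real and let (x,y,z) ∈ ℂ³ satisfy x² + y² + z² + x·y·z − 4 + τ² = 0. Then there exists a quadruple L₁,L₂,L₃,L₄ ∈ SL(2,ℂ) admissible for τ whose trace coordinates are exactly (x,y,z), i.e. tr(L₁L₂) = x, tr(L₂L₃) = y, tr(L₂L₄) = z. -/

import Mathlib

open Complex Matrix

private lemma helper_quadruple (t x y z b c q r : ℂ)
    (hbc : b * c = x ^ 2 / 4 - 1) (hqr : q * r = y ^ 2 / 4 - 1)
    (hbr : b * r = (-z - x * y / 2 + Complex.I * t) / 2)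
    (hcq : c * q = (-z - x * y / 2 - Complex.I * t) / 2) :
    ∃ L₁ L₂ L₃ L₄ : Matrix.SpecialLinearGroup (Fin 2) ℂ,
      L₁ * L₂ * L₃ * L₄ = 1 ∧
      Matrix.trace (L₁ : Matrix (Fin 2) (Fin 2) ℂ) = 0 ∧
      Matrix.trace (L₂ : Matrix (Fin 2) (Fin 2) ℂ) = 0 ∧
      Matrix.trace (L₃ : Matrix (Fin 2) (Fin 2) ℂ) = 0 ∧
      Matrix.trace (L₄ : Matrix (Fin 2) (Fin 2) ℂ) = t ∧
      Matrix.trace ((L₁ : Matrix (Fin 2) (Fin 2) ℂ) * (L₂ : Matrix (Fin 2) (Fin 2) ℂ)) = x ∧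
      Matrix.trace ((L₂ : Matrix (Fin 2) (Fin 2) ℂ) * (L₃ : Matrix (Fin 2) (Fin 2) ℂ)) = y ∧
      Matrix.trace ((L₂ : Matrix (Fin 2) (Fin 2) ℂ) * (L₄ : Matrix (Fin 2) (Fin 2) ℂ)) = z := by
  have hI : Complex.I * Complex.I = -1 := Complex.I_mul_I
  refine ⟨⟨!![-Complex.I * x / 2, b; c, Complex.I * x / 2], ?_⟩,
         ⟨!![Complex.I, 0; 0, -Complex.I], ?_⟩,
         ⟨!![-Complex.I * y / 2, q; r, Complex.I * y / 2], ?_⟩,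
         ⟨!![Complex.I * x * y / 4 + Complex.I * c * q, -(b * y + q * x) / 2;
            -(r * x + y * c) / 2, -Complex.I * b * r - Complex.I * x * y / 4], ?_⟩,
         ?_, ?_, ?_, ?_, ?_, ?_, ?_, ?_⟩
  · simp only [Matrix.det_fin_two_of]
    linear_combination (- x ^ 2 / 4) * hI - hbc
  · simp only [Matrix.det_fin_two_of]
    linear_combination -hI
  · simp only [Matrix.det_fin_two_of]
    linear_combination (- y ^ 2 / 4) * hI - hqr
  · simp only [Matrix.det_fin_two_of]
    linear_combination (-(x * y / 4 + c * q) * (b * r + x * y / 4)) * hI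
      + (q * r - y ^ 2 / 4) * hbc - hqr
  · ext i j
    change (((_ : Matrix (Fin 2) (Fin 2) ℂ) * (_ : Matrix (Fin 2) (Fin 2) ℂ) * (_ : Matrix (Fin 2) (Fin 2) ℂ) * (_ : Matrix (Fin 2) (Fin 2) ℂ) : Matrix (Fin 2) (Fin 2) ℂ)) i j = (1 : Matrix (Fin 2) (Fin 2) ℂ) i j
    fin_cases i <;> fin_cases j
    · simp [Matrix.mul_apply, Fin.sum_univ_two]
      linear_combination (x * y * c * q / 4 + x ^ 2 * r * q / 4 + y ^ 2 * b * c / 4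
          - b * r * c * q
          + (Complex.I * Complex.I - 1) * (x * y * c * q / 4 + x ^ 2 * y ^ 2 / 16)) * hI
        + (q * r - y ^ 2 / 4) * hbc - hqr
    · simp [Matrix.mul_apply, Fin.sum_univ_two]
      linear_combination (Complex.I * (x * b * r * q + y * b ^ 2 * r) / 2) * hI
    · simp [Matrix.mul_apply, Fin.sum_univ_two]
      linear_combination (-Complex.I * (c * x * r * q + c ^ 2 * y * q) / 2) * hI
    · simp [Matrix.mul_apply, Fin.sum_univ_two]
      linear_combination (b * c * y ^ 2 / 4 - b * c * q * r + x * y * r * b / 4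
          + x ^ 2 * r * q / 4
          + (Complex.I * Complex.I - 1) * (x * y * r * b / 4 + x ^ 2 * y ^ 2 / 16)) * hI
        + (q * r - y ^ 2 / 4) * hbc - hqr
  · simp [Matrix.trace_fin_two_of]; ring
  · simp [Matrix.trace_fin_two_of]
  · simp [Matrix.trace_fin_two_of]; ring
  · simp [Matrix.trace_fin_two_of]
    linear_combination Complex.I * hcq - Complex.I * hbr - t * hI
  · simp [Matrix.mul_apply, Matrix.trace_fin_two, Fin.sum_univ_two]
    linear_combination (-x) * hI
  · simp [Matrix.mul_apply, Matrix.trace_fin_two, Fin.sum_univ_two]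
    linear_combination (-y) * hI
  · simp [Matrix.mul_apply, Matrix.trace_fin_two, Fin.sum_univ_two]
    linear_combination (-hbr - hcq) + (x * y / 2 + c * q + b * r) * hI

theorem exists_admissible_quadruple_with_given_trace_coordinates
    (τ : ℝ) (hτ0 : 0 < τ) (hτ2 : τ < 2) (x y z : ℂ)
    (hxyz : x ^ 2 + y ^ 2 + z ^ 2 + x * y * z - 4 + (τ : ℂ) ^ 2 = 0) :
    ∃ L₁ L₂ L₃ L₄ : Matrix.SpecialLinearGroup (Fin 2) ℂ,
      L₁ * L₂ * L₃ * L₄ = 1 ∧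
      Matrix.trace (L₁ : Matrix (Fin 2) (Fin 2) ℂ) = 0 ∧
      Matrix.trace (L₂ : Matrix (Fin 2) (Fin 2) ℂ) = 0 ∧
      Matrix.trace (L₃ : Matrix (Fin 2) (Fin 2) ℂ) = 0 ∧
      Matrix.trace (L₄ : Matrix (Fin 2) (Fin 2) ℂ) = (τ : ℂ) ∧
      Matrix.trace ((L₁ : Matrix (Fin 2) (Fin 2) ℂ) * (L₂ : Matrix (Fin 2) (Fin 2) ℂ)) = x ∧
      Matrix.trace ((L₂ : Matrix (Fin 2) (Fin 2) ℂ) * (L₃ : Matrix (Fin 2) (Fin 2) ℂ)) = y ∧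
      Matrix.trace ((L₂ : Matrix (Fin 2) (Fin 2) ℂ) * (L₄ : Matrix (Fin 2) (Fin 2) ℂ)) = z := by
  have hI : Complex.I * Complex.I = -1 := Complex.I_mul_I
  have htne : (τ : ℂ) ≠ 0 := by exact_mod_cast ne_of_gt hτ0
  have key : (x ^ 2 / 4 - 1) * (y ^ 2 / 4 - 1) =
      ((-z - x * y / 2 + Complex.I * (τ : ℂ)) / 2) *
      ((-z - x * y / 2 - Complex.I * (τ : ℂ)) / 2) := by
    linear_combination (-(1 : ℂ)/4) * hxyz + ((τ : ℂ) ^ 2 / 4) * hI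
  by_cases hC : (-z - x * y / 2 + Complex.I * (τ : ℂ)) / 2 = 0
  · -- then D = -I*τ ≠ 0
    have hD : ((-z - x * y / 2 - Complex.I * (τ : ℂ)) / 2) ≠ 0 := by
      intro h
      apply htne
      have := sub_eq_zero.mpr (hC.trans h.symm)
      have h2 : Complex.I * (τ : ℂ) = 0 := by linear_combination this
      rcases mul_eq_zero.mp h2 with h3 | h3
      · exact absurd h3 Complex.I_ne_zero
      · exact h3
    refine helper_quadruple (τ : ℂ) x y z
      ((x ^ 2 / 4 - 1) / ((-z - x * y / 2 - Complex.I * (τ : ℂ)) / 2))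
      ((-z - x * y / 2 - Complex.I * (τ : ℂ)) / 2) 1 (y ^ 2 / 4 - 1)
      (div_mul_cancel₀ _ hD) (one_mul _) ?_ (by rw [mul_one])
    -- b * r = C = 0
    rw [hC, div_mul_eq_mul_div, div_eq_iff hD]
    linear_combination key + (-(z + x * y / 2 + Complex.I * (τ : ℂ)) / 2) * hC
  · refine helper_quadruple (τ : ℂ) x y z 1 (x ^ 2 / 4 - 1)
      ((y ^ 2 / 4 - 1) / ((-z - x * y / 2 + Complex.I * (τ : ℂ)) / 2))
      ((-z - x * y / 2 + Complex.I * (τ : ℂ)) / 2)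
      (one_mul _) (div_mul_cancel₀ _ hC) (one_mul _) ?_
    rw [mul_div_assoc', div_eq_iff hC]
    linear_combination key
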